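/- arXiv:1105.0361 — 3 statements merged into one kernel-verified Lean document; each statement's English description precedes it below -/
import Mathlib

section
/- Fix r ≥ 1 and a real s > r/2. Let (ε_t)_{t} be an independent family of Rademacher random variables indexed by r-tuples of positive integers, and define for each n ≥ 1 the random variable X_n(ω) = n^{−s} ∑_{m_1+⋯+m_r = n} ε_{(m_1,...,m_r)}(ω) Λ(m_1)⋯Λ(m_r). Then ∑_{n=1}^∞ Var(X_n) < ∞. -/
open MeasureTheory ProbabilityTheory Filter Asymptotics

private lemma rg_card_aux (r n : ℕ) (hr : 1 ≤ r) :
    ((Finset.Nat.antidiagonalTuple r n).filter (fun m => ∀ i, 0 < m i)).card ≤ (n+1)^(r-1) := by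
  classical
  set i₀ : Fin r := ⟨0, hr⟩ with hi₀
  have key := Finset.card_le_card_of_injOn
    (f := fun (m : Fin r → ℕ) (j : {i : Fin r // i ≠ i₀}) => m j.1)
    (t := Fintype.piFinset (fun _ : {i : Fin r // i ≠ i₀} => Finset.range (n+1)))
    (s := (Finset.Nat.antidiagonalTuple r n).filter (fun m => ∀ i, 0 < m i))
    (by
      intro m hm
      rw [Finset.mem_coe, Finset.mem_filter, Finset.Nat.mem_antidiagonalTuple] at hm
      rw [Finset.mem_coe, Fintype.mem_piFinset]
      intro j
      rw [Finset.mem_range, Nat.lt_succ_iff, ← hm.1]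
      exact Finset.single_le_sum (fun i _ => Nat.zero_le _) (Finset.mem_univ j.1))
    (by
      intro m hm m' hm' h
      rw [Finset.mem_coe, Finset.mem_filter, Finset.Nat.mem_antidiagonalTuple] at hm hm'
      have he : ∀ j ∈ Finset.univ.erase i₀, m j = m' j := fun j hj =>
        congrFun h ⟨j, (Finset.mem_erase.1 hj).1⟩
      have h1 : m i₀ + ∑ j ∈ Finset.univ.erase i₀, m j = n := by
        rw [Finset.add_sum_erase _ m (Finset.mem_univ i₀)]; exact hm.1
      have h2 : m' i₀ + ∑ j ∈ Finset.univ.erase i₀, m' j = n := by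
        rw [Finset.add_sum_erase _ m' (Finset.mem_univ i₀)]; exact hm'.1
      have hsum : (∑ j ∈ Finset.univ.erase i₀, m j) = ∑ j ∈ Finset.univ.erase i₀, m' j :=
        Finset.sum_congr rfl he
      funext i
      by_cases hi : i = i₀
      · subst hi; omega
      · exact congrFun h ⟨i, hi⟩)
  calc ((Finset.Nat.antidiagonalTuple r n).filter (fun m => ∀ i, 0 < m i)).card
      ≤ (Fintype.piFinset (fun _ : {i : Fin r // i ≠ i₀} => Finset.range (n+1))).card := key
    _ = (n+1)^(r-1) := by
        rw [Fintype.card_piFinset]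
        simp [Fintype.card_subtype_compl, Fintype.card_subtype_eq]

private lemma rg_summable_aux (r : ℕ) (hr : 1 ≤ r) (s : ℝ) (hs : (r : ℝ) / 2 < s) :
    Summable (fun n : ℕ =>
      ((n:ℝ)^(-s))^2 * (((n:ℝ)+1)^(r-1) * (Real.log n)^(2*r))) := by
  have hpos : 0 < 2*s - r := by linarith
  set δ : ℝ := (2*s - r)/2 with hδ
  have hδ0 : 0 < δ := by positivity
  set q : ℝ := 1 + δ with hq
  have hsum : Summable (fun n : ℕ => (n:ℝ)^(-q)) :=
    Real.summable_nat_rpow.2 (by simp only [hq]; linarith)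
  have hlog : (fun x : ℝ => (Real.log x)^(2*r)) =o[atTop] fun x => x ^ δ := by
    have h := isLittleO_log_rpow_rpow_atTop ((2*r : ℕ) : ℝ) hδ0
    have he : (fun x : ℝ => Real.log x ^ (((2*r : ℕ)) : ℝ)) = fun x => (Real.log x)^(2*r) :=
      funext fun x => Real.rpow_natCast _ _
    rwa [he] at h
  have hmain : (fun x : ℝ => (x^(-s))^2 * ((x+1)^(r-1) * (Real.log x)^(2*r)))
      =O[atTop] fun x => x^(-q) := by
    have step1 : (fun x : ℝ => (x^(-s))^2 * ((x+1)^(r-1) * (Real.log x)^(2*r)))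
        =O[atTop] fun x => x^(-q-δ) * (Real.log x)^(2*r) := by
      apply IsBigO.of_bound (2^(r-1))
      filter_upwards [eventually_ge_atTop (1:ℝ)] with x hx
      have hx0 : (0:ℝ) < x := by linarith
      have hlog0 : 0 ≤ Real.log x := Real.log_nonneg hx
      have e1 : (x^(-s))^2 = x^(-(2*s)) := by
        rw [← Real.rpow_natCast (x^(-s)) 2, ← Real.rpow_mul hx0.le]
        congr 1
        push_cast
        ring
      have e2 : (x+1)^(r-1) ≤ 2^(r-1) * x^(r-1) := by
        rw [← mul_pow]
        exact pow_le_pow_left₀ (by linarith) (by linarith) _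
      have e3 : (x:ℝ)^(r-1) = x^((r:ℝ)-1) := by
        rw [← Real.rpow_natCast x (r-1)]
        congr 1
        push_cast [Nat.cast_sub hr]
        ring
      have e4 : x^(-(2*s)) * x^((r:ℝ)-1) = x^(-q-δ) := by
        rw [← Real.rpow_add hx0]
        congr 1
        simp only [hq, hδ]
        ring
      have hb : (x^(-s))^2 * ((x+1)^(r-1) * (Real.log x)^(2*r))
          ≤ 2^(r-1) * (x^(-q-δ) * (Real.log x)^(2*r)) := by
        have hxs : 0 ≤ (x^(-s))^2 := sq_nonneg _
        have hl2 : 0 ≤ (Real.log x)^(2*r) := by positivity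
        calc (x^(-s))^2 * ((x+1)^(r-1) * (Real.log x)^(2*r))
            ≤ (x^(-s))^2 * ((2^(r-1) * x^(r-1)) * (Real.log x)^(2*r)) := by
              apply mul_le_mul_of_nonneg_left _ hxs
              exact mul_le_mul_of_nonneg_right e2 hl2
          _ = 2^(r-1) * ((x^(-(2*s)) * x^((r:ℝ)-1)) * (Real.log x)^(2*r)) := by
              rw [e1, ← e3]; ring
          _ = 2^(r-1) * (x^(-q-δ) * (Real.log x)^(2*r)) := by rw [e4]
      have hn1 : ‖(x^(-s))^2 * ((x+1)^(r-1) * (Real.log x)^(2*r))‖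
          = (x^(-s))^2 * ((x+1)^(r-1) * (Real.log x)^(2*r)) := by
        rw [Real.norm_eq_abs, abs_of_nonneg]
        have : (0:ℝ) ≤ (x+1)^(r-1) := by positivity
        positivity
      have hn2 : ‖x^(-q-δ) * (Real.log x)^(2*r)‖ = x^(-q-δ) * (Real.log x)^(2*r) := by
        rw [Real.norm_eq_abs, abs_of_nonneg]
        have : (0:ℝ) ≤ x^(-q-δ) := Real.rpow_nonneg hx0.le _
        positivity
      rw [hn1, hn2]
      exact hb
    have step2 : (fun x : ℝ => x^(-q-δ) * (Real.log x)^(2*r))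
        =O[atTop] fun x => x^(-q-δ) * x^δ :=
      (isBigO_refl (fun x : ℝ => x^(-q-δ)) atTop).mul hlog.isBigO
    have step3 : (fun x : ℝ => x^(-q-δ) * x^δ) =ᶠ[atTop] fun x => x^(-q) := by
      filter_upwards [eventually_gt_atTop (0:ℝ)] with x hx
      rw [← Real.rpow_add hx]
      norm_num
    exact (step1.trans step2).trans step3.isBigO
  have hcomp := hmain.comp_tendsto tendsto_natCast_atTop_atTop
  exact summable_of_isBigO_nat hsum hcomp

/-- For s > r/2, the variances of X_n(ω) = n^{-s} ∑_{m_1+⋯+m_r=n} ε_m(ω) Λ(m_1)⋯Λ(m_r)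
are summable. -/
theorem random_goldbach_variance_summable {Ω : Type*} [MeasurableSpace Ω]
    (μ : Measure Ω) [IsProbabilityMeasure μ]
    (r : ℕ) (hr : 1 ≤ r) (s : ℝ) (hs : (r : ℝ) / 2 < s)
    (ε : (Fin r → ℕ) → Ω → ℝ)
    (hmeas : ∀ t, Measurable (ε t))
    (h1 : ∀ t, μ {ω | ε t ω = 1} = 1/2)
    (h2 : ∀ t, μ {ω | ε t ω = -1} = 1/2)
    (hind : iIndepFun ε μ) :
    Summable (fun n : ℕ => variance (fun ω =>
      (n : ℝ) ^ (-s) *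
        ∑ m ∈ (Finset.Nat.antidiagonalTuple r n).filter (fun m => ∀ i, 0 < m i),
          ε m ω * ∏ i, ArithmeticFunction.vonMangoldt (m i)) μ) := by
  classical
  set c : (Fin r → ℕ) → ℝ := fun m => ∏ i, ArithmeticFunction.vonMangoldt (m i) with hc
  set S : ℕ → Finset (Fin r → ℕ) :=
    fun n => (Finset.Nat.antidiagonalTuple r n).filter (fun m => ∀ i, 0 < m i) with hS
  -- a.e. ε t = ±1
  have hae : ∀ t, ∀ᵐ ω ∂μ, ε t ω = 1 ∨ ε t ω = -1 := by
    intro t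
    have hA : MeasurableSet {ω | ε t ω = 1} := hmeas t (measurableSet_singleton 1)
    have hB : MeasurableSet {ω | ε t ω = -1} := hmeas t (measurableSet_singleton (-1))
    have hdisj : Disjoint {ω | ε t ω = 1} {ω | ε t ω = -1} := by
      rw [Set.disjoint_left]
      rintro ω hω1 hω2
      simp only [Set.mem_setOf_eq] at hω1 hω2
      rw [hω1] at hω2; norm_num at hω2
    have hu : μ ({ω | ε t ω = 1} ∪ {ω | ε t ω = -1}) = 1 := by
      rw [measure_union hdisj hB, h1 t, h2 t]
      exact ENNReal.add_halves 1
    have hcompl : μ ({ω | ε t ω = 1} ∪ {ω | ε t ω = -1})ᶜ = 0 :=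
      (prob_compl_eq_zero_iff (hA.union hB)).2 hu
    have : ∀ᵐ ω ∂μ, ω ∈ {ω | ε t ω = 1} ∪ {ω | ε t ω = -1} := by
      rw [ae_iff]
      convert hcompl using 2
      rfl
    exact this.mono (by intro ω hω; simpa using hω)
  have hmemt : ∀ t, MemLp (ε t) 2 μ := by
    intro t
    refine memLp_of_bounded (a := -1) (b := 1) ((hae t).mono ?_) (hmeas t).aestronglyMeasurable 2
    rintro ω (h | h) <;> rw [h] <;> constructor <;> norm_num
  have hvar : ∀ t, variance (ε t) μ ≤ 1 := by
    intro t
    rw [variance_eq_sub (hmemt t)]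
    have h2' : μ[ε t ^ 2] = 1 := by
      have hee : (fun ω => (ε t ^ 2) ω) =ᵐ[μ] fun _ => (1:ℝ) := by
        refine (hae t).mono ?_
        rintro ω (h | h) <;> simp [h]
      rw [integral_congr_ae hee, integral_const]
      simp
    rw [h2']
    nlinarith [sq_nonneg (μ[ε t])]
  refine Summable.of_nonneg_of_le (fun n => variance_nonneg _ _) ?_
    (rg_summable_aux r hr s hs)
  intro n
  -- per summand MemLp
  have hmem : ∀ m ∈ S n, MemLp (fun ω => ε m ω * c m) 2 μ := by
    intro m _
    have := (hmemt m).const_mul (c m)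
    have hrw : (fun ω => ε m ω * c m) = fun ω => c m * ε m ω := funext fun ω => mul_comm _ _
    rwa [hrw]
  have hpair : Set.Pairwise ↑(S n)
      (fun m m' => IndepFun (fun ω => ε m ω * c m) (fun ω => ε m' ω * c m') μ) := by
    intro m _ m' _ hne
    exact (hind.indepFun hne).comp (measurable_mul_const (c m)) (measurable_mul_const (c m'))
  have key : variance (fun ω => (n : ℝ) ^ (-s) * ∑ m ∈ S n, ε m ω * c m) μ
      = ((n:ℝ)^(-s))^2 * ∑ m ∈ S n, variance (fun ω => ε m ω * c m) μ := by
    rw [variance_const_mul]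
    congr 1
    have hrw : (fun ω => ∑ m ∈ S n, ε m ω * c m)
        = ∑ m ∈ S n, (fun ω => ε m ω * c m) := by
      funext ω; simp
    rw [hrw, IndepFun.variance_sum hmem hpair]
  have hterm : ∀ m ∈ S n, variance (fun ω => ε m ω * c m) μ ≤ (Real.log n)^(2*r) := by
    intro m hm
    rw [hS, Finset.mem_filter, Finset.Nat.mem_antidiagonalTuple] at hm
    have hle : ∀ i, ArithmeticFunction.vonMangoldt (m i) ≤ Real.log n := by
      intro i
      refine ArithmeticFunction.vonMangoldt_le_log.trans ?_
      have h1' : 0 < m i := hm.2 i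
      have h2' : m i ≤ n := hm.1 ▸ Finset.single_le_sum (fun j _ => Nat.zero_le _) (Finset.mem_univ i)
      exact Real.log_le_log (by exact_mod_cast h1') (by exact_mod_cast h2')
    have h0 : 0 ≤ c m :=
      Finset.prod_nonneg fun i _ => ArithmeticFunction.vonMangoldt_nonneg
    have hcle : c m ≤ (Real.log n)^r := by
      rw [hc]
      calc (∏ i, ArithmeticFunction.vonMangoldt (m i))
          ≤ ∏ _i : Fin r, Real.log n :=
            Finset.prod_le_prod (fun i _ => ArithmeticFunction.vonMangoldt_nonneg)
              (fun i _ => hle i)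
        _ = (Real.log n)^r := by rw [Finset.prod_const, Finset.card_univ, Fintype.card_fin]
    have hsq : (c m)^2 ≤ (Real.log n)^(2*r) := by
      calc (c m)^2 ≤ ((Real.log n)^r)^2 := pow_le_pow_left₀ h0 hcle 2
        _ = (Real.log n)^(2*r) := by rw [← pow_mul, mul_comm]
    have hrw : (fun ω => ε m ω * c m) = fun ω => c m * ε m ω := funext fun ω => mul_comm _ _
    rw [hrw, variance_const_mul]
    calc (c m)^2 * variance (ε m) μ ≤ (c m)^2 * 1 :=
          mul_le_mul_of_nonneg_left (hvar m) (sq_nonneg _)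
      _ = (c m)^2 := mul_one _
      _ ≤ (Real.log n)^(2*r) := hsq
  have hsum_le : ∑ m ∈ S n, variance (fun ω => ε m ω * c m) μ
      ≤ ((n:ℝ)+1)^(r-1) * (Real.log n)^(2*r) := by
    have h1' := Finset.sum_le_card_nsmul (S n) _ _ hterm
    rw [nsmul_eq_mul] at h1'
    refine h1'.trans ?_
    have hcard : ((S n).card : ℝ) ≤ ((n:ℝ)+1)^(r-1) := by
      have := rg_card_aux r n hr
      calc ((S n).card : ℝ) ≤ (((n+1)^(r-1) : ℕ) : ℝ) := by exact_mod_cast this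
        _ = ((n:ℝ)+1)^(r-1) := by push_cast; ring
    have hlognn : (0:ℝ) ≤ (Real.log n)^(2*r) := by positivity
    exact mul_le_mul_of_nonneg_right hcard hlognn
  calc variance (fun ω => (n : ℝ) ^ (-s) * ∑ m ∈ S n, ε m ω * c m) μ
      = ((n:ℝ)^(-s))^2 * ∑ m ∈ S n, variance (fun ω => ε m ω * c m) μ := key
    _ ≤ ((n:ℝ)^(-s))^2 * (((n:ℝ)+1)^(r-1) * (Real.log n)^(2*r)) :=
        mul_le_mul_of_nonneg_left hsum_le (sq_nonneg _)
end

section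
/- Fix r ≥ 1 and a real s > r/2. With notation as above, the random series ∑_{n=1}^∞ X_n(ω), where X_n(ω) = n^{−s} ∑_{m_1+⋯+m_r=n} ε_{(m_1,...,m_r)}(ω) Λ(m_1)⋯Λ(m_r), converges almost surely. -/
open MeasureTheory ProbabilityTheory Filter Finset Topology
open scoped ENNReal NNReal

section Aux

variable {Ω : Type*} {mΩ : MeasurableSpace Ω} {μ : Measure Ω}

/-- An `eLpNorm` bound from a variance bound, for mean-zero L² random variables. -/
lemma aux_eLpNorm_two_le_sqrt [IsProbabilityMeasure μ] {f : Ω → ℝ} {C : ℝ}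
    (hf : MemLp f 2 μ) (hmean : ∫ ω, f ω ∂μ = 0) (hv : variance f μ ≤ C) :
    eLpNorm f 2 μ ≤ ENNReal.ofReal (Real.sqrt C) := by
  have hC0 : 0 ≤ C := le_trans (variance_nonneg f μ) hv
  have h1 : evariance f μ ≤ ENNReal.ofReal C := by
    rw [← hf.ofReal_variance_eq]
    exact ENNReal.ofReal_le_ofReal hv
  have h2 : eLpNorm f 2 μ = evariance f μ ^ (1 / 2 : ℝ) := by
    rw [eLpNorm_eq_lintegral_rpow_enorm_toReal two_ne_zero ENNReal.ofNat_ne_top, evariance]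
    simp_rw [hmean, sub_zero, ENNReal.toReal_ofNat]
    congr 1
    refine lintegral_congr fun ω => ?_
    rw [← ENNReal.rpow_natCast]
    norm_num
  calc eLpNorm f 2 μ = evariance f μ ^ (1 / 2 : ℝ) := h2
    _ ≤ ENNReal.ofReal C ^ (1 / 2 : ℝ) := ENNReal.rpow_le_rpow h1 (by norm_num)
    _ = ENNReal.ofReal (C ^ (1 / 2 : ℝ)) :=
        ENNReal.ofReal_rpow_of_nonneg hC0 (by norm_num)
    _ = ENNReal.ofReal (Real.sqrt C) := by rw [Real.sqrt_eq_rpow]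

/-- Kolmogorov one-series theorem, in a block form suitable for our application:
if `(ε t)` is an independent family of mean-zero random variables with variance at most `1`,
`B n` are blocks of indices of "weight" `n`, and the coefficients `a t` are square-summable
along the blocks, then the series `∑ n, ∑ t ∈ B n, a t * ε t` converges almost surely. -/
lemma aux_kolmogorov_blocks {ι : Type*} (μ : Measure Ω) [IsProbabilityMeasure μ]
    (ε : ι → Ω → ℝ) (hmeas : ∀ t, Measurable (ε t))
    (hind : iIndepFun ε μ)
    (hL2 : ∀ t, MemLp (ε t) 2 μ)
    (hmean : ∀ t, ∫ ω, ε t ω ∂μ = 0)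
    (hvar : ∀ t, variance (ε t) μ ≤ 1)
    (w : ι → ℕ) (B : ℕ → Finset ι) (hB : ∀ n, ∀ t ∈ B n, w t = n)
    (a : ι → ℝ) (C : ℝ)
    (hC : ∀ N, ∑ n ∈ Finset.range N, ∑ t ∈ B n, (a t) ^ 2 ≤ C) :
    ∀ᵐ ω ∂μ, ∃ L : ℝ, Tendsto
      (fun N => ∑ n ∈ Finset.range N, ∑ t ∈ B n, a t * ε t ω) atTop (𝓝 L) := by
  classical
  set Z : ι → Ω → ℝ := fun t ω => a t * ε t ω with hZdef
  have hZmeas : ∀ t, Measurable (Z t) := fun t => (hmeas t).const_mul _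
  have hZ2 : ∀ t, MemLp (Z t) 2 μ := fun t => (hL2 t).const_mul _
  have hZint : ∀ t, Integrable (Z t) μ := fun t => (hZ2 t).integrable one_le_two
  have hZmean : ∀ t, ∫ ω, Z t ω ∂μ = 0 := by
    intro t
    show ∫ ω, a t * ε t ω ∂μ = 0
    rw [integral_const_mul, hmean t, mul_zero]
  set S : ℕ → Ω → ℝ := fun N ω => ∑ n ∈ Finset.range (N + 1), ∑ t ∈ B n, Z t ω with hSdef
  -- the filtration generated by the variables of weight ≤ N
  set F : Filtration ℕ mΩ :=
    { seq := fun N => ⨆ t ∈ {t | w t ≤ N}, MeasurableSpace.comap (ε t) inferInstance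
      mono' := fun N M hNM => biSup_mono fun t ht => le_trans ht hNM
      le' := fun N => iSup₂_le fun t _ => (hmeas t).comap_le } with hFdef
  have hεF : ∀ t N, w t ≤ N → Measurable[F N] (ε t) := fun t N ht =>
    measurable_iff_comap_le.mpr (le_biSup (fun t => MeasurableSpace.comap (ε t) inferInstance) ht)
  have hadp : StronglyAdapted F S := by
    intro N
    refine Measurable.stronglyMeasurable ?_
    refine Finset.measurable_sum _ fun n hn => Finset.measurable_sum _ fun t ht => ?_
    have hw : w t ≤ N := by
      rw [hB n t ht]
      exact Nat.lt_succ_iff.mp (Finset.mem_range.mp hn)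
    exact (hεF t N hw).const_mul _
  have hS2 : ∀ N, MemLp (S N) 2 μ := fun N =>
    memLp_finsetSum (Finset.range (N + 1)) fun n _ =>
      memLp_finsetSum (B n) fun t _ => hZ2 t
  have hSint : ∀ N, Integrable (S N) μ := fun N => (hS2 N).integrable one_le_two
  -- S is a martingale
  have hmart : Martingale S F μ := by
    refine martingale_of_condExp_sub_eq_zero_nat hadp hSint fun N => ?_
    have hdiff : S (N + 1) - S N = fun ω => ∑ t ∈ B (N + 1), Z t ω := by
      funext ω
      simp [hSdef, Finset.sum_range_succ]
    rw [hdiff]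
    set m₁ : MeasurableSpace Ω :=
      ⨆ t ∈ {t | w t = N + 1}, MeasurableSpace.comap (ε t) inferInstance with hm₁
    have hle₁ : m₁ ≤ mΩ := iSup₂_le fun t _ => (hmeas t).comap_le
    have hsm : StronglyMeasurable[m₁] (fun ω => ∑ t ∈ B (N + 1), Z t ω) := by
      refine Measurable.stronglyMeasurable (Finset.measurable_sum _ fun t ht => ?_)
      have : Measurable[m₁] (ε t) := measurable_iff_comap_le.mpr
        (le_biSup (fun t => MeasurableSpace.comap (ε t) inferInstance) (hB _ t ht))
      exact this.const_mul _
    have hindep : Indep m₁ (F N) μ := by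
      refine indep_iSup_of_disjoint (fun t => (hmeas t).comap_le) hind ?_
      refine Set.disjoint_left.mpr fun t h1 h2 => ?_
      simp only [Set.mem_setOf_eq] at h1 h2
      omega
    have hce := condExp_indep_eq hle₁ (F.le N) hsm hindep
    refine hce.trans ?_
    have hD0 : ∫ ω, (∑ t ∈ B (N + 1), Z t ω) ∂μ = 0 := by
      rw [integral_finset_sum _ fun t _ => hZint t]
      exact Finset.sum_eq_zero fun t _ => hZmean t
    rw [hD0]
    exact Filter.Eventually.of_forall fun _ => rfl
  -- nonnegativity of C
  have hC0 : 0 ≤ C := le_trans (by simp) (hC 0)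
  -- variance bound
  have hvarS : ∀ N, variance (S N) μ ≤ C := by
    intro N
    have hTdisj : Set.PairwiseDisjoint ↑(Finset.range (N + 1)) B := by
      intro m _ n _ hmn
      refine Finset.disjoint_left.mpr fun t htm htn => hmn ?_
      rw [← hB m t htm, hB n t htn]
    have hSeq : S N = ∑ t ∈ (Finset.range (N + 1)).biUnion B, Z t := by
      funext ω
      calc S N ω = ∑ n ∈ Finset.range (N + 1), ∑ t ∈ B n, Z t ω := rfl
        _ = ∑ t ∈ (Finset.range (N + 1)).biUnion B, Z t ω :=
            (Finset.sum_biUnion hTdisj).symm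
        _ = (∑ t ∈ (Finset.range (N + 1)).biUnion B, Z t) ω := by
            rw [Finset.sum_apply]
    have hvs : variance (S N) μ =
        ∑ t ∈ (Finset.range (N + 1)).biUnion B, variance (Z t) μ := by
      rw [hSeq]
      refine IndepFun.variance_sum (fun t _ => hZ2 t) ?_
      intro t _ u _ htu
      exact (hind.indepFun htu).comp (measurable_const_mul (a t)) (measurable_const_mul (a u))
    calc variance (S N) μ
        = ∑ t ∈ (Finset.range (N + 1)).biUnion B, variance (Z t) μ := hvs
      _ ≤ ∑ t ∈ (Finset.range (N + 1)).biUnion B, (a t) ^ 2 := by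
          refine Finset.sum_le_sum fun t _ => ?_
          have h1 : variance (Z t) μ = (a t) ^ 2 * variance (ε t) μ :=
            variance_const_mul (a t) (ε t) μ
          rw [h1]
          calc (a t) ^ 2 * variance (ε t) μ ≤ (a t) ^ 2 * 1 :=
                mul_le_mul_of_nonneg_left (hvar t) (sq_nonneg _)
            _ = (a t) ^ 2 := mul_one _
      _ = ∑ n ∈ Finset.range (N + 1), ∑ t ∈ B n, (a t) ^ 2 :=
          Finset.sum_biUnion hTdisj
      _ ≤ C := hC (N + 1)
  -- L¹ bound
  have hmeanS : ∀ N, ∫ ω, S N ω ∂μ = 0 := by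
    intro N
    show ∫ ω, ∑ n ∈ Finset.range (N + 1), ∑ t ∈ B n, Z t ω ∂μ = 0
    rw [integral_finset_sum _ fun n _ =>
      integrable_finset_sum (B n) fun t _ => hZint t]
    refine Finset.sum_eq_zero fun n _ => ?_
    rw [integral_finset_sum _ fun t _ => hZint t]
    exact Finset.sum_eq_zero fun t _ => hZmean t
  have hbdd : ∀ N, eLpNorm (S N) 1 μ ≤ ((Real.sqrt C).toNNReal : ℝ≥0∞) := by
    intro N
    refine le_trans (eLpNorm_le_eLpNorm_of_exponent_le (p := 1) (q := 2) (by norm_num)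
      (hS2 N).aestronglyMeasurable) ?_
    have := aux_eLpNorm_two_le_sqrt (hS2 N) (hmeanS N) (hvarS N)
    simpa [ENNReal.ofReal] using this
  filter_upwards [hmart.submartingale.exists_ae_tendsto_of_bdd hbdd] with ω hω
  obtain ⟨L, hL⟩ := hω
  refine ⟨L, ?_⟩
  rw [← tendsto_add_atTop_iff_nat 1]
  exact hL

/-- Cardinality bound for the set of tuples with positive entries summing to `n`. -/
lemma aux_card_bound (k n : ℕ) :
    ((Finset.Nat.antidiagonalTuple (k + 1) n).filter (fun m => ∀ i, 0 < m i)).card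
      ≤ (n + 1) ^ k := by
  classical
  have hinj : Set.InjOn (fun (t : Fin (k + 1) → ℕ) => (fun i : Fin k => t i.castSucc))
      ↑((Finset.Nat.antidiagonalTuple (k + 1) n).filter (fun m => ∀ i, 0 < m i)) := by
    intro t ht u hu h
    have htn : ∑ i, t i = n := Finset.Nat.mem_antidiagonalTuple.mp
      (Finset.mem_filter.mp ht).1
    have hun : ∑ i, u i = n := Finset.Nat.mem_antidiagonalTuple.mp
      (Finset.mem_filter.mp hu).1
    have hpre : ∀ i : Fin k, t i.castSucc = u i.castSucc := fun i => congrFun h i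
    funext i
    refine Fin.lastCases ?_ (fun i => hpre i) i
    · rw [Fin.sum_univ_castSucc] at htn hun
      have : ∑ i : Fin k, t i.castSucc = ∑ i : Fin k, u i.castSucc :=
        Finset.sum_congr rfl fun i _ => hpre i
      omega
  have hmaps : ∀ t ∈ ((Finset.Nat.antidiagonalTuple (k + 1) n).filter
      (fun m => ∀ i, 0 < m i)),
      (fun i : Fin k => t i.castSucc) ∈ Fintype.piFinset fun _ : Fin k =>
        Finset.range (n + 1) := by
    intro t ht
    refine Fintype.mem_piFinset.mpr fun i => Finset.mem_range.mpr ?_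
    have htn : ∑ j, t j = n := Finset.Nat.mem_antidiagonalTuple.mp
      (Finset.mem_filter.mp ht).1
    have : t i.castSucc ≤ ∑ j, t j :=
      Finset.single_le_sum (fun j _ => Nat.zero_le _) (Finset.mem_univ _)
    omega
  have := Finset.card_le_card_of_injOn _ hmaps hinj
  simpa [Fintype.card_piFinset] using this

end Aux

/-- For s > r/2, the random series ∑_n X_n(ω), with
X_n(ω) = n^{-s} ∑_{m_1+⋯+m_r=n} ε_m(ω) Λ(m_1)⋯Λ(m_r), converges almost surely. -/
theorem random_goldbach_series_converges_ae {Ω : Type*} [MeasurableSpace Ω]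
    (μ : Measure Ω) [IsProbabilityMeasure μ]
    (r : ℕ) (hr : 1 ≤ r) (s : ℝ) (hs : (r : ℝ) / 2 < s)
    (ε : (Fin r → ℕ) → Ω → ℝ)
    (hmeas : ∀ t, Measurable (ε t))
    (h1 : ∀ t, μ {ω | ε t ω = 1} = 1/2)
    (h2 : ∀ t, μ {ω | ε t ω = -1} = 1/2)
    (hind : iIndepFun ε μ) :
    ∀ᵐ ω ∂μ, ∃ L : ℝ, Filter.Tendsto
      (fun N => ∑ n ∈ Finset.range N,
        (n : ℝ) ^ (-s) *
          ∑ m ∈ (Finset.Nat.antidiagonalTuple r n).filter (fun m => ∀ i, 0 < m i),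
            ε m ω * ∏ i, ArithmeticFunction.vonMangoldt (m i))
      Filter.atTop (nhds L) := by
  classical
  -- basic a.e. properties of the signs
  have hae : ∀ t, ∀ᵐ ω ∂μ, ε t ω = 1 ∨ ε t ω = -1 := by
    intro t
    have hA : MeasurableSet {ω | ε t ω = 1} := hmeas t (measurableSet_singleton 1)
    have hB' : MeasurableSet {ω | ε t ω = -1} := hmeas t (measurableSet_singleton (-1))
    have hdisj : Disjoint {ω | ε t ω = 1} {ω | ε t ω = -1} := by
      refine Set.disjoint_left.mpr fun ω hω1 hω2 => ?_
      simp only [Set.mem_setOf_eq] at hω1 hω2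
      rw [hω1] at hω2; norm_num at hω2
    have hunion : μ ({ω | ε t ω = 1} ∪ {ω | ε t ω = -1}) = 1 := by
      rw [measure_union hdisj hB', h1 t, h2 t]
      rw [ENNReal.div_add_div_same, one_add_one_eq_two]
      exact ENNReal.div_self two_ne_zero ENNReal.ofNat_ne_top
    have hcompl : μ ({ω | ε t ω = 1} ∪ {ω | ε t ω = -1})ᶜ = 0 :=
      (prob_compl_eq_zero_iff (hA.union hB')).mpr hunion
    filter_upwards [measure_eq_zero_iff_ae_notMem.mp hcompl] with ω hω
    have hω' := Set.notMem_compl_iff.mp hω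
    simpa [Set.mem_union, Set.mem_setOf_eq] using hω'
  have hL2 : ∀ t, MemLp (ε t) 2 μ := by
    intro t
    refine MemLp.of_bound (hmeas t).aestronglyMeasurable 1 ?_
    filter_upwards [hae t] with ω hω
    rcases hω with h | h <;> simp [h]
  have hmean : ∀ t, ∫ ω, ε t ω ∂μ = 0 := by
    intro t
    have hA : MeasurableSet {ω | ε t ω = 1} := hmeas t (measurableSet_singleton 1)
    have hB' : MeasurableSet {ω | ε t ω = -1} := hmeas t (measurableSet_singleton (-1))
    have heq : ε t =ᵐ[μ]
        ({ω | ε t ω = 1}.indicator (fun _ => (1 : ℝ)) +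
         {ω | ε t ω = -1}.indicator (fun _ => (-1 : ℝ))) := by
      filter_upwards [hae t] with ω hω
      rcases hω with h | h
      · have h2' : ω ∉ {ω | ε t ω = -1} := by
          simp only [Set.mem_setOf_eq, h]; norm_num
        simp [Set.indicator_apply, Set.mem_setOf_eq, h, h2']
      · have h1' : ω ∉ {ω | ε t ω = 1} := by
          simp only [Set.mem_setOf_eq, h]; norm_num
        simp [Set.indicator_apply, Set.mem_setOf_eq, h, h1']
    rw [integral_congr_ae heq]
    simp only [Pi.add_apply]
    rw [integral_add
      ((integrable_const (1 : ℝ)).indicator hA)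
      ((integrable_const (-1 : ℝ)).indicator hB'),
      integral_indicator_const _ hA, integral_indicator_const _ hB', measureReal_def, measureReal_def, h1 t, h2 t]
    norm_num [ENNReal.toReal_div]
  have hvar : ∀ t, variance (ε t) μ ≤ 1 := by
    intro t
    refine le_trans (variance_le_expectation_sq (hmeas t).aestronglyMeasurable) ?_
    have heq : (ε t ^ 2 : Ω → ℝ) =ᵐ[μ] fun _ => (1 : ℝ) := by
      filter_upwards [hae t] with ω hω
      rcases hω with h | h <;> simp [Pi.pow_apply, h]
    rw [integral_congr_ae heq]
    simp
  -- set up block data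
  obtain ⟨k, rfl⟩ : ∃ k, r = k + 1 := ⟨r - 1, (Nat.succ_pred_eq_of_pos hr).symm⟩
  set B : ℕ → Finset (Fin (k + 1) → ℕ) := fun n =>
    (Finset.Nat.antidiagonalTuple (k + 1) n).filter (fun m => ∀ i, 0 < m i) with hBdef
  set w : (Fin (k + 1) → ℕ) → ℕ := fun t => ∑ i, t i with hwdef
  have hB : ∀ n, ∀ t ∈ B n, w t = n := by
    intro n t ht
    exact Finset.Nat.mem_antidiagonalTuple.mp (Finset.mem_filter.mp ht).1
  set c : (Fin (k + 1) → ℕ) → ℝ := fun t => ∏ i, ArithmeticFunction.vonMangoldt (t i) with hcdef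
  set a : (Fin (k + 1) → ℕ) → ℝ := fun t => ((w t : ℕ) : ℝ) ^ (-s) * c t with hadef
  -- the quantitative bound
  have hrpos : (0 : ℝ) < ((k + 1) : ℝ) := by positivity
  set a0 : ℝ := 2 * s - (k + 1) with ha0def
  have ha0pos : 0 < a0 := by
    have h' := hs
    push_cast at h'
    simp only [ha0def]
    linarith
  set δ : ℝ := a0 / (4 * (k + 1)) with hδdef
  have hδpos : 0 < δ := by positivity
  set K : ℝ := 2 ^ k * (1 / δ) ^ (2 * (k + 1)) with hKdef
  have hKpos : 0 < K := by positivity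
  set g : ℕ → ℝ := fun n => K * (n : ℝ) ^ (-1 - a0 / 2) with hgdef
  have hgsum : Summable g := by
    refine Summable.mul_left K ?_
    refine Real.summable_nat_rpow.mpr ?_
    linarith
  have hVnonneg : ∀ n, 0 ≤ ∑ t ∈ B n, (a t) ^ 2 :=
    fun n => Finset.sum_nonneg fun t _ => sq_nonneg _
  have hVg : ∀ n, ∑ t ∈ B n, (a t) ^ 2 ≤ g n := by
    intro n
    rcases Nat.eq_zero_or_pos n with rfl | hn
    · -- n = 0 : the block is empty
      have hB0 : B 0 = ∅ := by
        refine Finset.eq_empty_of_forall_notMem fun t ht => ?_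
        have hw0 : w t = 0 := hB 0 t ht
        have hpos : ∀ i, 0 < t i := (Finset.mem_filter.mp ht).2
        have : t 0 ≤ ∑ i, t i :=
          Finset.single_le_sum (fun j _ => Nat.zero_le _) (Finset.mem_univ _)
        have := hpos 0
        simp only [hwdef] at hw0
        omega
      rw [hB0]
      simp only [Finset.sum_empty, hgdef]
      have : ((0 : ℕ) : ℝ) ^ (-1 - a0 / 2) = 0 := by
        rw [Nat.cast_zero, Real.zero_rpow]
        intro h; linarith
      rw [this, mul_zero]
    · -- n ≥ 1
      have hx1 : (1 : ℝ) ≤ (n : ℝ) := by exact_mod_cast hn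
      have hx0 : (0 : ℝ) < (n : ℝ) := by linarith
      set x : ℝ := (n : ℝ) with hxdef
      -- bound for the product of von Mangoldt values
      have hcb : ∀ t ∈ B n, c t ≤ (x ^ δ / δ) ^ (k + 1) := by
        intro t ht
        have htn : ∑ i, t i = n := hB n t ht
        have hfac : ∀ i : Fin (k + 1),
            ArithmeticFunction.vonMangoldt (t i) ≤ x ^ δ / δ := by
          intro i
          refine le_trans ArithmeticFunction.vonMangoldt_le_log ?_
          refine le_trans (Real.log_le_rpow_div (Nat.cast_nonneg _) hδpos) ?_
          have hle : ((t i : ℕ) : ℝ) ≤ x := by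
            have : t i ≤ ∑ j, t j :=
              Finset.single_le_sum (fun j _ => Nat.zero_le _) (Finset.mem_univ _)
            rw [htn] at this
            rw [hxdef]
            exact_mod_cast this
          gcongr
        calc c t = ∏ i, ArithmeticFunction.vonMangoldt (t i) := rfl
          _ ≤ ∏ _i : Fin (k + 1), (x ^ δ / δ) := by
              refine Finset.prod_le_prod (fun i _ => ArithmeticFunction.vonMangoldt_nonneg)
                (fun i _ => hfac i)
          _ = (x ^ δ / δ) ^ (k + 1) := by
              rw [Finset.prod_const, Finset.card_univ, Fintype.card_fin]
      have hcnonneg : ∀ t, 0 ≤ c t :=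
        fun t => Finset.prod_nonneg fun i _ => ArithmeticFunction.vonMangoldt_nonneg
      have hM0 : (0 : ℝ) ≤ x ^ δ / δ := by positivity
      -- per-term bound
      have hterm : ∀ t ∈ B n, (a t) ^ 2 ≤ (x ^ (-s) * (x ^ δ / δ) ^ (k + 1)) ^ 2 := by
        intro t ht
        have hwt : ((w t : ℕ) : ℝ) = x := by rw [hB n t ht]
        have h0 : 0 ≤ a t := by
          rw [hadef]
          exact mul_nonneg (Real.rpow_nonneg (Nat.cast_nonneg _) _) (hcnonneg t)
        have hle : a t ≤ x ^ (-s) * (x ^ δ / δ) ^ (k + 1) := by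
          show ((w t : ℕ) : ℝ) ^ (-s) * c t ≤ x ^ (-s) * (x ^ δ / δ) ^ (k + 1)
          rw [hwt]
          exact mul_le_mul_of_nonneg_left (hcb t ht) (Real.rpow_nonneg hx0.le _)
        exact pow_le_pow_left₀ h0 hle 2
      have hcard : (B n).card ≤ (n + 1) ^ k := aux_card_bound k n
      -- sum over the block
      have hsumblock : ∑ t ∈ B n, (a t) ^ 2
          ≤ ((n + 1 : ℕ) : ℝ) ^ k * (x ^ (-s) * (x ^ δ / δ) ^ (k + 1)) ^ 2 := by
        calc ∑ t ∈ B n, (a t) ^ 2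
            ≤ ∑ _t ∈ B n, (x ^ (-s) * (x ^ δ / δ) ^ (k + 1)) ^ 2 :=
              Finset.sum_le_sum hterm
          _ = ((B n).card : ℝ) * (x ^ (-s) * (x ^ δ / δ) ^ (k + 1)) ^ 2 := by
              rw [Finset.sum_const, nsmul_eq_mul]
          _ ≤ ((n + 1 : ℕ) : ℝ) ^ k * (x ^ (-s) * (x ^ δ / δ) ^ (k + 1)) ^ 2 := by
              refine mul_le_mul_of_nonneg_right ?_ (sq_nonneg _)
              calc ((B n).card : ℝ) ≤ (((n + 1) ^ k : ℕ) : ℝ) := by exact_mod_cast hcard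
                _ = ((n + 1 : ℕ) : ℝ) ^ k := by push_cast; ring
      refine le_trans hsumblock ?_
      -- now pure rpow algebra
      have h2x : ((n + 1 : ℕ) : ℝ) ^ k ≤ 2 ^ k * x ^ k := by
        rw [← mul_pow]
        refine pow_le_pow_left₀ (by positivity) ?_ k
        push_cast
        linarith
      have hstep : ((n + 1 : ℕ) : ℝ) ^ k * (x ^ (-s) * (x ^ δ / δ) ^ (k + 1)) ^ 2
          ≤ (2 ^ k * x ^ k) * (x ^ (-s) * (x ^ δ / δ) ^ (k + 1)) ^ 2 :=
        mul_le_mul_of_nonneg_right h2x (sq_nonneg _)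
      refine le_trans hstep ?_
      have hexp : (2 ^ k * x ^ k) * (x ^ (-s) * (x ^ δ / δ) ^ (k + 1)) ^ 2
          = K * (x ^ (k : ℝ) * (x ^ (-s)) ^ (2 : ℕ) * (x ^ δ) ^ (2 * (k + 1) : ℕ)) := by
        rw [hKdef, ← Real.rpow_natCast x k]
        ring
      rw [hexp]
      have hcollect : x ^ (k : ℝ) * (x ^ (-s)) ^ (2 : ℕ) * (x ^ δ) ^ (2 * (k + 1) : ℕ)
          = x ^ ((k : ℝ) + (-s) * 2 + δ * (2 * (k + 1))) := by
        rw [← Real.rpow_natCast (x ^ (-s)) 2, ← Real.rpow_natCast (x ^ δ) (2 * (k + 1)),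
          ← Real.rpow_mul hx0.le, ← Real.rpow_mul hx0.le,
          ← Real.rpow_add hx0, ← Real.rpow_add hx0]
        push_cast
        ring_nf
      rw [hcollect]
      have hexpeq : (k : ℝ) + (-s) * 2 + δ * (2 * (k + 1)) = -1 - a0 / 2 := by
        have hk : (k : ℝ) = (((k+1) : ℕ) : ℝ) - 1 := by
          push_cast; ring
        rw [hk, hδdef, ha0def]
        field_simp
        push_cast
        ring
      rw [hexpeq]
  have hVsum : Summable (fun n => ∑ t ∈ B n, (a t) ^ 2) :=
    Summable.of_nonneg_of_le hVnonneg hVg hgsum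
  set C : ℝ := ∑' n, ∑ t ∈ B n, (a t) ^ 2 with hCdef
  have hC : ∀ N, ∑ n ∈ Finset.range N, ∑ t ∈ B n, (a t) ^ 2 ≤ C := by
    intro N
    exact Summable.sum_le_tsum (Finset.range N) (fun n _ => hVnonneg n) hVsum
  -- apply the Kolmogorov-type lemma
  have hmain := aux_kolmogorov_blocks μ ε hmeas hind hL2 hmean hvar w B hB a C hC
  filter_upwards [hmain] with ω hω
  obtain ⟨L, hL⟩ := hω
  refine ⟨L, ?_⟩
  refine Tendsto.congr (fun N => ?_) hL
  refine Finset.sum_congr rfl fun n hn => ?_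
  rw [Finset.mul_sum]
  refine Finset.sum_congr rfl fun t ht => ?_
  have hwt : ((w t : ℕ) : ℝ) = (n : ℝ) := by rw [hB n t ht]
  show ((w t : ℕ) : ℝ) ^ (-s) * c t * ε t ω = (n : ℝ) ^ (-s) * (ε t ω * c t)
  rw [hwt]
  ring
end

section
/- Let (ε_n)_{n ≥ 1} be an independent sequence of Rademacher random variables and s a real number with s > 1/2. Then the series ∑_{n=1}^∞ ε_n(ω) Λ(n) n^{−s} converges almost surely. -/
open MeasureTheory ProbabilityTheory

open Real
open scoped ENNReal NNReal
open scoped ENNReal NNReal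


lemma summable_c_sq {s : ℝ} (hs : 1/2 < s) :
    Summable (fun n : ℕ => (ArithmeticFunction.vonMangoldt n * (n : ℝ) ^ (-s)) ^ 2) := by
  set t : ℝ := (s - 1/2)/2 with ht
  have htpos : 0 < t := by rw [ht]; linarith
  have hsum : Summable (fun n : ℕ => (1/t)^2 * (n : ℝ) ^ (2*t - 2*s)) := by
    apply Summable.mul_left
    rw [Real.summable_nat_rpow]
    nlinarith
  apply hsum.of_nonneg_of_le (fun n => by positivity)
  intro n
  rcases Nat.eq_zero_or_pos n with rfl | hn
  · simp [ArithmeticFunction.map_zero]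
    positivity
  have hn0 : (0:ℝ) < n := by exact_mod_cast hn
  have hΛ : (0:ℝ) ≤ ArithmeticFunction.vonMangoldt n := ArithmeticFunction.vonMangoldt_nonneg
  have h1 : ArithmeticFunction.vonMangoldt n ≤ (n:ℝ) ^ t / t :=
    ArithmeticFunction.vonMangoldt_le_log.trans (Real.log_le_rpow_div n.cast_nonneg htpos)
  have h2 : (ArithmeticFunction.vonMangoldt n * (n : ℝ) ^ (-s)) ^ 2
      ≤ ((n:ℝ) ^ t / t * (n : ℝ) ^ (-s)) ^ 2 := by
    apply pow_le_pow_left₀ (by positivity)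
    exact mul_le_mul_of_nonneg_right h1 (Real.rpow_nonneg n.cast_nonneg _)
  refine h2.trans (le_of_eq ?_)
  rw [mul_pow, div_pow, ← Real.rpow_natCast ((n:ℝ)^t), ← Real.rpow_natCast ((n:ℝ)^(-s)),
    ← Real.rpow_mul hn0.le, ← Real.rpow_mul hn0.le, div_mul_eq_mul_div,
    ← Real.rpow_add hn0, one_div, inv_pow, inv_mul_eq_div]
  push_cast
  ring_nf

section Main
variable {Ω : Type*} [MeasurableSpace Ω] {μ : Measure Ω} [IsProbabilityMeasure μ]

lemma eps_ae_abs_one {e : Ω → ℝ} (hm : Measurable e)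
    (h1 : μ {ω | e ω = 1} = 1/2) (h2 : μ {ω | e ω = -1} = 1/2) :
    ∀ᵐ ω ∂μ, e ω = 1 ∨ e ω = -1 := by
  have hA : MeasurableSet {ω | e ω = 1} := hm (measurableSet_singleton 1)
  have hB : MeasurableSet {ω | e ω = -1} := hm (measurableSet_singleton (-1))
  have hd : Disjoint {ω | e ω = 1} {ω | e ω = -1} := by
    rw [Set.disjoint_left]; rintro ω (h1 : e ω = 1) (h2 : e ω = -1); rw [h1] at h2; norm_num at h2
  have hu : μ ({ω | e ω = 1} ∪ {ω | e ω = -1}) = 1 := by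
    rw [measure_union hd hB, h1, h2]
    rw [ENNReal.div_add_div_same, one_add_one_eq_two]
    exact ENNReal.div_self two_ne_zero ENNReal.ofNat_ne_top
  have : μ ({ω | e ω = 1} ∪ {ω | e ω = -1})ᶜ = 0 := by
    rw [measure_compl (hA.union hB) (measure_ne_top _ _), hu, measure_univ, tsub_self]
  filter_upwards [measure_eq_zero_iff_ae_notMem.mp this] with ω hω
  simpa [Set.mem_union] using not_not.mp hω

lemma eps_integral_zero {e : Ω → ℝ} (hm : Measurable e)
    (h1 : μ {ω | e ω = 1} = 1/2) (h2 : μ {ω | e ω = -1} = 1/2) :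
    ∫ ω, e ω ∂μ = 0 := by
  set A := {ω | e ω = 1}
  set B := {ω | e ω = -1}
  have hA : MeasurableSet A := hm (measurableSet_singleton 1)
  have hB : MeasurableSet B := hm (measurableSet_singleton (-1))
  have heq : e =ᵐ[μ] (A.indicator (fun _ => (1:ℝ)) + B.indicator (fun _ => (-1:ℝ))) := by
    filter_upwards [eps_ae_abs_one hm h1 h2] with ω hω
    rcases hω with h | h
    · have hωA : ω ∈ A := h
      have hωB : ω ∉ B := by simp only [B, Set.mem_setOf_eq, h]; norm_num
      simp [Set.indicator_of_mem hωA, Set.indicator_of_notMem hωB, h]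
    · have hωB : ω ∈ B := h
      have hωA : ω ∉ A := by simp only [A, Set.mem_setOf_eq, h]; norm_num
      simp [Set.indicator_of_mem hωB, Set.indicator_of_notMem hωA, h]
  have hiA : Integrable (A.indicator (fun _ => (1:ℝ))) μ :=
    (integrable_const (1:ℝ)).indicator hA
  have hiB : Integrable (B.indicator (fun _ => (-1:ℝ))) μ :=
    (integrable_const (-1:ℝ)).indicator hB
  rw [integral_congr_ae heq]
  simp only [Pi.add_apply]
  rw [integral_add hiA hiB,
    integral_indicator_const _ hA, integral_indicator_const _ hB, measureReal_def, measureReal_def, h1, h2]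
  simp [ENNReal.toReal_div]

end Main


/-- For s > 1/2, ∑ ε_n(ω) Λ(n) n^{-s} converges almost surely. -/
theorem random_vonMangoldt_series_converges_ae {Ω : Type*} [MeasurableSpace Ω]
    (μ : Measure Ω) [IsProbabilityMeasure μ]
    (ε : ℕ → Ω → ℝ)
    (hmeas : ∀ n, Measurable (ε n))
    (h1 : ∀ n, μ {ω | ε n ω = 1} = 1/2)
    (h2 : ∀ n, μ {ω | ε n ω = -1} = 1/2)
    (hind : iIndepFun ε μ)
    (s : ℝ) (hs : 1/2 < s) :
    ∀ᵐ ω ∂μ, ∃ L : ℝ, Filter.Tendsto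
      (fun N => ∑ n ∈ Finset.range N,
        ε n ω * ArithmeticFunction.vonMangoldt n * (n : ℝ) ^ (-s))
      Filter.atTop (nhds L) := by
  classical
  set c : ℕ → ℝ := fun n => ArithmeticFunction.vonMangoldt n * (n : ℝ) ^ (-s) with hc
  set X : ℕ → Ω → ℝ := fun n ω => ε n ω * c n with hX
  have hXmeas : ∀ n, Measurable (X n) := fun n => (hmeas n).mul_const _
  have hXsm : ∀ n, StronglyMeasurable (X n) := fun n => (hXmeas n).stronglyMeasurable
  have hεabs : ∀ n, ∀ᵐ ω ∂μ, ε n ω = 1 ∨ ε n ω = -1 :=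
    fun n => eps_ae_abs_one (hmeas n) (h1 n) (h2 n)
  have hεLp : ∀ n, MemLp (ε n) 2 μ := fun n =>
    MemLp.of_bound (hmeas n).aestronglyMeasurable 1
      (by filter_upwards [hεabs n] with ω hω; rcases hω with h | h <;> simp [h])
  have hXLp : ∀ n, MemLp (X n) 2 μ := fun n =>
    MemLp.of_bound (hXmeas n).aestronglyMeasurable |c n|
      (by filter_upwards [hεabs n] with ω hω
          rcases hω with h | h <;> simp [hX, h, abs_mul])
  have hXint : ∀ n, Integrable (X n) μ := fun n => (hXLp n).integrable one_le_two
  have hXmean : ∀ n, μ[X n] = 0 := by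
    intro n
    have h0 : ∫ ω, ε n ω * c n ∂μ = (∫ ω, ε n ω ∂μ) * c n := integral_mul_const _ _
    rw [show μ[X n] = ∫ ω, ε n ω * c n ∂μ from rfl, h0,
      eps_integral_zero (hmeas n) (h1 n) (h2 n), zero_mul]
  have hXvar : ∀ n, variance (X n) μ ≤ c n ^ 2 := by
    intro n
    rw [variance_eq_sub (hXLp n), hXmean n]
    have hsq : (fun ω => (X n ω) ^ 2) =ᵐ[μ] fun _ => c n ^ 2 := by
      filter_upwards [hεabs n] with ω hω
      rcases hω with h | h <;> simp [hX, mul_pow, h]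
    have : μ[(X n) ^ 2] = c n ^ 2 := by
      rw [show ((X n) ^ 2 : Ω → ℝ) = fun ω => (X n ω) ^ 2 from rfl,
        integral_congr_ae hsq, integral_const]
      simp
    rw [this]; norm_num
  have hXind : iIndepFun X μ :=
    hind.comp (fun n x => x * c n) (fun n => measurable_mul_const _)
  set ℱ := Filtration.natural X hXsm with hℱ
  set f : ℕ → Ω → ℝ := fun n ω => ∑ k ∈ Finset.range (n + 1), X k ω with hf
  have hadp : StronglyAdapted ℱ f := by
    intro i
    refine Finset.stronglyMeasurable_fun_sum _ fun k hk => ?_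
    exact ((Filtration.stronglyAdapted_natural hXsm) k).mono (ℱ.mono (Finset.mem_range_succ_iff.mp hk))
  have hfint : ∀ n, Integrable (f n) μ := fun n =>
    integrable_finset_sum _ fun k _ => hXint k
  have hsum_eq : ∀ t : Finset ℕ, (∑ k ∈ t, X k) = fun ω => ∑ k ∈ t, X k ω := by
    intro t; ext ω; simp
  have hmart : Martingale f ℱ μ := by
    refine ⟨hadp, fun i j hij => ?_⟩
    have hdecomp : f j = f i + ∑ k ∈ Finset.Ico (i + 1) (j + 1), X k := by
      ext ω
      simp only [Pi.add_apply, hsum_eq, hf]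
      rw [← Finset.sum_range_add_sum_Ico _ (by omega : i + 1 ≤ j + 1)]
    rw [hdecomp]
    refine (condExp_add (hfint i) (integrable_finset_sum' _ fun k _ => hXint k) _).trans ?_
    have hc1 : μ[f i|ℱ i] = f i :=
      condExp_of_stronglyMeasurable (ℱ.le i) (hadp i) (hfint i)
    have hc2 : ∀ k ∈ Finset.Ico (i + 1) (j + 1), μ[X k|ℱ i] =ᵐ[μ] fun _ => 0 := by
      intro k hk
      have hik : i < k := by
        simp only [Finset.mem_Ico] at hk; omega
      refine (hXind.condExp_natural_ae_eq_of_lt hXsm hik).trans ?_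
      rw [hXmean k]
    have hc2' : μ[∑ k ∈ Finset.Ico (i + 1) (j + 1), X k|ℱ i] =ᵐ[μ] fun _ => 0 := by
      refine (condExp_finsetSum (fun k _ => hXint k) _).trans ?_
      have := (ae_ball_iff (Finset.Ico (i + 1) (j + 1)).countable_toSet).mpr fun k hk =>
        hc2 k hk
      filter_upwards [this] with ω hω
      simp only [Finset.sum_apply]
      exact Finset.sum_eq_zero fun k hk => hω k hk
    rw [hc1]
    filter_upwards [hc2'] with ω hω
    simp only [Pi.add_apply, hω, add_zero]
  -- L¹ bound
  have hcsum : Summable fun n : ℕ => c n ^ 2 := summable_c_sq hs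
  set C : ℝ := ∑' n, c n ^ 2 with hC
  have hC0 : 0 ≤ C := tsum_nonneg fun n => sq_nonneg _
  have hfLp : ∀ n, MemLp (f n) 2 μ := fun n =>
    memLp_finsetSum _ fun k _ => hXLp k
  have hfvar : ∀ n, variance (f n) μ ≤ C := by
    intro n
    have hfeq : variance (f n) μ = variance (∑ k ∈ Finset.range (n + 1), X k) μ := by
      rw [hsum_eq]
    rw [hfeq, IndepFun.variance_sum (fun k _ => hXLp k)
      (fun k _ l _ hkl => hXind.indepFun hkl)]
    calc ∑ k ∈ Finset.range (n + 1), variance (X k) μ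
        ≤ ∑ k ∈ Finset.range (n + 1), c k ^ 2 :=
          Finset.sum_le_sum fun k _ => hXvar k
      _ ≤ C := Summable.sum_le_tsum _ (fun k _ => sq_nonneg _) hcsum
  have hfmean : ∀ n, μ[f n] = 0 := by
    intro n
    rw [show μ[f n] = ∫ ω, ∑ k ∈ Finset.range (n + 1), X k ω ∂μ from rfl,
      integral_finset_sum _ fun k _ => hXint k]
    exact Finset.sum_eq_zero fun k _ => hXmean k
  have hL2 : ∀ n, eLpNorm (f n) 2 μ ≤ ENNReal.ofReal (Real.sqrt C) := by
    intro n
    have hev : evariance (f n) μ = ∫⁻ ω, (‖f n ω‖₊ : ℝ≥0∞) ^ 2 ∂μ := by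
      rw [evariance]
      congr 1 with ω
      rw [hfmean n, sub_zero, enorm_eq_nnnorm]
    have hev2 : evariance (f n) μ ≤ ENNReal.ofReal C := by
      rw [← (hfLp n).ofReal_variance_eq]
      exact ENNReal.ofReal_le_ofReal (hfvar n)
    rw [eLpNorm_eq_lintegral_rpow_enorm_toReal two_ne_zero ENNReal.ofNat_ne_top]
    simp only [ENNReal.toReal_ofNat, one_div]
    have : ∫⁻ ω, (‖f n ω‖₊ : ℝ≥0∞) ^ (2 : ℝ) ∂μ ≤ ENNReal.ofReal C := by
      calc ∫⁻ ω, (‖f n ω‖₊ : ℝ≥0∞) ^ (2 : ℝ) ∂μ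
          = ∫⁻ ω, (‖f n ω‖₊ : ℝ≥0∞) ^ (2 : ℕ) ∂μ := by
            congr 1 with ω
            rw [← ENNReal.rpow_natCast]
            norm_num
        _ = evariance (f n) μ := hev.symm
        _ ≤ ENNReal.ofReal C := hev2
    calc (∫⁻ ω, (‖f n ω‖₊ : ℝ≥0∞) ^ (2 : ℝ) ∂μ) ^ (2 : ℝ)⁻¹
        ≤ (ENNReal.ofReal C) ^ (2 : ℝ)⁻¹ :=
          ENNReal.rpow_le_rpow this (by norm_num)
      _ = ENNReal.ofReal (Real.sqrt C) := by
          rw [ENNReal.ofReal_rpow_of_nonneg hC0 (by norm_num : (0:ℝ) ≤ 2⁻¹),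
            Real.sqrt_eq_rpow]
          norm_num
  set R : ℝ≥0 := (Real.sqrt C).toNNReal with hR
  have hL1 : ∀ n, eLpNorm (f n) 1 μ ≤ (R : ℝ≥0∞) := by
    intro n
    refine (eLpNorm_le_eLpNorm_of_exponent_le one_le_two
      (hfLp n).aestronglyMeasurable).trans ?_
    exact (hL2 n).trans_eq rfl
  have hconv := (hmart.submartingale).exists_ae_tendsto_of_bdd hL1
  filter_upwards [hconv] with ω hω
  obtain ⟨L, hL⟩ := hω
  refine ⟨L, ?_⟩
  rw [← Filter.tendsto_add_atTop_iff_nat 1]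
  have : (fun n => ∑ k ∈ Finset.range (n + 1),
      ε k ω * ArithmeticFunction.vonMangoldt k * (k : ℝ) ^ (-s)) = fun n => f n ω := by
    funext n
    exact Finset.sum_congr rfl fun k _ => by rw [hX, hc, mul_assoc]
  rw [this]
  exact hL
end
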